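/- arXiv:2109.02566 — 2 statements merged into one kernel-verified Lean document; each statement's English description precedes it below -/
import Mathlib

section
/- Edge-reinforced random walk is partially exchangeable: for any finite graph G with initial weights α > 0 and any two finite paths σ, σ' starting at 0 that traverse each (undirected) edge of G the same number of times and end at the same vertex, the probability that the first n steps of the ERRW follow σ equals the probability that they follow σ'. -/
/-- Number of times the path `σ` crosses the undirected edge `{i,j}` during its first
`n` steps (in either direction). -/
def crossCount {V : Type*} [DecidableEq V] (σ : ℕ → V) (n : ℕ) (i j : V) : ℕ :=
  ((Finset.range n).filter
    (fun m => (σ m = i ∧ σ (m + 1) = j) ∨ (σ m = j ∧ σ (m + 1) = i))).card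

/-- The probability that an edge-reinforced random walk on `G` with initial weights `α`
follows the path `σ` for its first `n` steps: the product of the ERRW transition
probabilities `(α + L_m^{σ_m σ_{m+1}}) / Σ_k (α + L_m^{σ_m k})`. -/
noncomputable def errwPathProb {V : Type*} [Fintype V] [DecidableEq V]
    (G : SimpleGraph V) [DecidableRel G.Adj] (α : ℝ) (σ : ℕ → V) (n : ℕ) : ℝ :=
  ∏ m ∈ Finset.range n,
    (if G.Adj (σ m) (σ (m + 1)) then α + crossCount σ m (σ m) (σ (m + 1)) else 0) /
      ∑ k ∈ Finset.univ.filter (fun k => G.Adj (σ m) k), (α + crossCount σ m (σ m) k)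

open Finset

lemma prod_filter_count {M : Type*} [CommMonoid M] (p : ℕ → Prop) [DecidablePred p]
    (f : ℕ → M) (n : ℕ) :
    ∏ m ∈ (range n).filter p, f (((range m).filter p).card)
      = ∏ k ∈ range (((range n).filter p).card), f k := by
  induction n with
  | zero => simp
  | succ n ih =>
    rw [range_add_one, filter_insert]
    by_cases hp : p n
    · rw [if_pos hp, prod_insert (by simp), ih, card_insert_of_notMem (by simp),
        prod_range_succ, mul_comm]
    · rw [if_neg hp]; exact ih

lemma crossCount_symm {V : Type*} [DecidableEq V] (σ : ℕ → V) (n : ℕ) (i j : V) :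
    crossCount σ n i j = crossCount σ n j i := by
  unfold crossCount
  congr 1
  apply filter_congr
  intro m _
  simp [or_comm]

lemma crossCount_eq_zero {V : Type*} [DecidableEq V] {G : SimpleGraph V} (σ : ℕ → V) (n : ℕ)
    (hσ : ∀ m < n, G.Adj (σ m) (σ (m + 1))) {i j : V} (hij : ¬ G.Adj i j) :
    crossCount σ n i j = 0 := by
  unfold crossCount
  rw [card_eq_zero, filter_eq_empty_iff]
  rintro m hm (⟨h1, h2⟩ | ⟨h1, h2⟩)
  · exact hij (h1 ▸ h2 ▸ hσ m (mem_range.mp hm))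
  · exact hij ((h1 ▸ h2 ▸ hσ m (mem_range.mp hm)).symm)

lemma sum_cross {V : Type*} [Fintype V] [DecidableEq V] (G : SimpleGraph V)
    [DecidableRel G.Adj] (σ : ℕ → V) (m : ℕ)
    (hm : ∀ m' < m, G.Adj (σ m') (σ (m' + 1))) (v : V) :
    (∑ k ∈ univ.filter (G.Adj v), crossCount σ m v k) + (if σ 0 = v then 1 else 0)
      = 2 * ((range m).filter (fun m' => σ m' = v)).card + (if σ m = v then 1 else 0) := by
  have hswap : (∑ k ∈ univ.filter (G.Adj v), crossCount σ m v k)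
      = ∑ m' ∈ range m, ∑ k ∈ univ.filter (G.Adj v),
          (if (σ m' = v ∧ σ (m' + 1) = k) ∨ (σ m' = k ∧ σ (m' + 1) = v) then 1 else 0) := by
    unfold crossCount
    rw [Finset.sum_comm]
    congr 1
    ext m'
    rw [card_filter]
  have hinner : ∀ m' < m, (∑ k ∈ univ.filter (G.Adj v),
      (if (σ m' = v ∧ σ (m' + 1) = k) ∨ (σ m' = k ∧ σ (m' + 1) = v) then 1 else 0))
      = (if σ m' = v then 1 else 0) + (if σ (m' + 1) = v then 1 else 0) := by
    intro m' hm'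
    have hadj := hm m' hm'
    by_cases ha : σ m' = v <;> by_cases hb : σ (m' + 1) = v
    · exact absurd hadj (by rw [ha, hb]; exact G.loopless.irrefl v)
    · rw [if_pos ha, if_neg hb]
      have : ∀ k, ((σ m' = v ∧ σ (m' + 1) = k) ∨ (σ m' = k ∧ σ (m' + 1) = v))
          ↔ k = σ (m' + 1) := by
        intro k
        constructor
        · rintro (⟨_, h⟩ | ⟨h1, h2⟩)
          · exact h.symm
          · exact absurd h2 hb
        · intro h; exact Or.inl ⟨ha, h.symm⟩
      simp only [this]
      rw [Finset.sum_ite_eq' (univ.filter (G.Adj v)) (σ (m' + 1)) (fun _ => 1)]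
      simp [ha ▸ hadj]
    · rw [if_neg ha, if_pos hb]
      have : ∀ k, ((σ m' = v ∧ σ (m' + 1) = k) ∨ (σ m' = k ∧ σ (m' + 1) = v))
          ↔ k = σ m' := by
        intro k
        constructor
        · rintro (⟨h1, _⟩ | ⟨h1, _⟩)
          · exact absurd h1 ha
          · exact h1.symm
        · intro h; exact Or.inr ⟨h.symm, hb⟩
      simp only [this]
      rw [Finset.sum_ite_eq' (univ.filter (G.Adj v)) (σ m') (fun _ => 1)]
      have : G.Adj v (σ m') := by rw [← hb]; exact hadj.symm
      simp [this]
    · have : ∀ k ∈ univ.filter (G.Adj v),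
          (if (σ m' = v ∧ σ (m' + 1) = k) ∨ (σ m' = k ∧ σ (m' + 1) = v) then 1 else 0) = 0 := by
        intro k _
        rw [if_neg]
        rintro (⟨h1, _⟩ | ⟨_, h2⟩)
        · exact ha h1
        · exact hb h2
      rw [Finset.sum_congr rfl this]
      simp [ha, hb]
  rw [hswap, Finset.sum_congr rfl (fun m' hm' => hinner m' (mem_range.mp hm')),
    Finset.sum_add_distrib]
  have h1 : (∑ m' ∈ range m, if σ m' = v then 1 else 0)
      = ((range m).filter (fun m' => σ m' = v)).card := (card_filter _ _).symm
  have h2 : (∑ m' ∈ range m, if σ (m' + 1) = v then 1 else 0) + (if σ 0 = v then 1 else 0)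
      = ((range m).filter (fun m' => σ m' = v)).card + (if σ m = v then 1 else 0) := by
    have := Finset.sum_range_succ' (fun m' => if σ m' = v then 1 else 0) m
    have h3 := Finset.sum_range_succ (fun m' => if σ m' = v then 1 else 0) m
    rw [h3] at this
    rw [← h1]
    omega
  omega

/-- Numerator fiber computation. -/
lemma num_fiber {V : Type*} [DecidableEq V] (α : ℝ) (σ : ℕ → V) (n : ℕ) (i j : V) :
    ∏ m ∈ (range n).filter (fun m => s(σ m, σ (m + 1)) = s(i, j)),
        (α + (crossCount σ m (σ m) (σ (m + 1)) : ℝ))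
      = ∏ k ∈ range (crossCount σ n i j), (α + (k : ℝ)) := by
  classical
  set p : ℕ → Prop := fun m => (σ m = i ∧ σ (m + 1) = j) ∨ (σ m = j ∧ σ (m + 1) = i) with hp
  have hfilt : ∀ N, (range N).filter (fun m => s(σ m, σ (m + 1)) = s(i, j))
      = (range N).filter p := by
    intro N
    apply filter_congr
    intro m _
    simp only [Sym2.eq_iff, hp, eq_iff_iff]
  have hcc : ∀ N, crossCount σ N i j = ((range N).filter p).card := by
    intro N
    unfold crossCount
    congr 1
  rw [hfilt]
  have hterm : ∀ m ∈ (range n).filter p,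
      (α + (crossCount σ m (σ m) (σ (m + 1)) : ℝ)) = α + (((range m).filter p).card : ℝ) := by
    intro m hmem
    have hpm : p m := (mem_filter.mp hmem).2
    rcases hpm with ⟨h1, h2⟩ | ⟨h1, h2⟩
    · rw [h1, h2, hcc]
    · rw [h1, h2, crossCount_symm, hcc]
  rw [Finset.prod_congr rfl hterm,
    prod_filter_count p (fun k => α + (k : ℝ)) n, hcc n]

/-- Partial exchangeability of edge-reinforced random walk: two paths in `G` starting at
the same vertex `v₀`, ending at the same vertex, and crossing each undirected edge of `G`
the same number of times, have the same ERRW probability. -/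
theorem errw_partially_exchangeable {V : Type*} [Fintype V] [DecidableEq V]
    (G : SimpleGraph V) [DecidableRel G.Adj] (α : ℝ) (hα : 0 < α)
    (v₀ : V) (σ σ' : ℕ → V) (n : ℕ)
    (hσ : ∀ m < n, G.Adj (σ m) (σ (m + 1)))
    (hσ' : ∀ m < n, G.Adj (σ' m) (σ' (m + 1)))
    (h0 : σ 0 = v₀) (h0' : σ' 0 = v₀)
    (hend : σ n = σ' n)
    (hcross : ∀ i j : V, G.Adj i j → crossCount σ n i j = crossCount σ' n i j) :
    errwPathProb G α σ n = errwPathProb G α σ' n := by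
  classical
  -- crossing counts agree for all pairs
  have hcross' : ∀ i j : V, crossCount σ n i j = crossCount σ' n i j := by
    intro i j
    by_cases h : G.Adj i j
    · exact hcross i j h
    · rw [crossCount_eq_zero σ n hσ h, crossCount_eq_zero σ' n hσ' h]
  -- visit counts agree
  have hN : ∀ v : V, ((range n).filter (fun m => σ m = v)).card
      = ((range n).filter (fun m => σ' m = v)).card := by
    intro v
    have e1 := sum_cross G σ n hσ v
    have e2 := sum_cross G σ' n hσ' v
    have hs : (∑ k ∈ univ.filter (G.Adj v), crossCount σ n v k)
        = ∑ k ∈ univ.filter (G.Adj v), crossCount σ' n v k := by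
      apply Finset.sum_congr rfl
      intro k hk
      exact hcross v k (mem_filter.mp hk).2
    rw [hs, h0, hend] at e1
    rw [h0'] at e2
    split_ifs at e1 e2 <;> omega
  -- rewrite path probability as Num / Den
  have hsplit : ∀ (τ : ℕ → V), (∀ m < n, G.Adj (τ m) (τ (m + 1))) →
      errwPathProb G α τ n
        = (∏ m ∈ range n, (α + (crossCount τ m (τ m) (τ (m + 1)) : ℝ)))
          / ∏ m ∈ range n,
              ∑ k ∈ univ.filter (fun k => G.Adj (τ m) k), (α + (crossCount τ m (τ m) k : ℝ)) := by
    intro τ hτ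
    unfold errwPathProb
    rw [← Finset.prod_div_distrib]
    apply Finset.prod_congr rfl
    intro m hm
    rw [if_pos (hτ m (mem_range.mp hm))]
  rw [hsplit σ hσ, hsplit σ' hσ']
  -- numerators agree
  have hNum : (∏ m ∈ range n, (α + (crossCount σ m (σ m) (σ (m + 1)) : ℝ)))
      = ∏ m ∈ range n, (α + (crossCount σ' m (σ' m) (σ' (m + 1)) : ℝ)) := by
    rw [← Finset.prod_fiberwise_of_maps_to
        (g := fun m => s(σ m, σ (m + 1))) (t := (univ : Finset (Sym2 V)))
        (fun m _ => mem_univ _),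
      ← Finset.prod_fiberwise_of_maps_to
        (g := fun m => s(σ' m, σ' (m + 1))) (t := (univ : Finset (Sym2 V)))
        (fun m _ => mem_univ _)]
    apply Finset.prod_congr rfl
    intro e _
    induction e using Sym2.ind with
    | _ i j => rw [num_fiber, num_fiber, hcross' i j]
  -- denominators agree
  have hDen : ∀ (τ : ℕ → V), (∀ m < n, G.Adj (τ m) (τ (m + 1))) → τ 0 = v₀ →
      (∏ m ∈ range n,
          ∑ k ∈ univ.filter (fun k => G.Adj (τ m) k), (α + (crossCount τ m (τ m) k : ℝ)))
        = ∏ v : V, ∏ c ∈ range (((range n).filter (fun m => τ m = v)).card),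
            (((univ.filter (G.Adj v)).card : ℝ) * α + 2 * c + 1
              - (if v₀ = v then 1 else 0)) := by
    intro τ hτ hτ0
    rw [← Finset.prod_fiberwise_of_maps_to (g := fun m => τ m) (t := (univ : Finset V))
      (fun m _ => mem_univ _)]
    apply Finset.prod_congr rfl
    intro v _
    have hterm : ∀ m ∈ (range n).filter (fun m => τ m = v),
        (∑ k ∈ univ.filter (fun k => G.Adj (τ m) k), (α + (crossCount τ m (τ m) k : ℝ)))
          = ((univ.filter (G.Adj v)).card : ℝ) * α
              + 2 * (((range m).filter (fun m' => τ m' = v)).card : ℝ) + 1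
              - (if v₀ = v then 1 else 0) := by
      intro m hmem
      obtain ⟨hmn, hmv⟩ := mem_filter.mp hmem
      have hmn' := mem_range.mp hmn
      have hsc := sum_cross G τ m (fun m' hm' => hτ m' (hm'.trans hmn')) v
      rw [hτ0, hmv, if_pos rfl] at hsc
      rw [hmv]
      rw [Finset.sum_add_distrib, Finset.sum_const, nsmul_eq_mul]
      have : (∑ k ∈ univ.filter (fun k => G.Adj v k), (crossCount τ m v k : ℝ))
          = ((∑ k ∈ univ.filter (G.Adj v), crossCount τ m v k : ℕ) : ℝ) := by
        push_cast
        rfl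
      rw [this]
      have hcast : ((∑ k ∈ univ.filter (G.Adj v), crossCount τ m v k : ℕ) : ℝ)
          = 2 * (((range m).filter (fun m' => τ m' = v)).card : ℝ) + 1
            - (if v₀ = v then 1 else 0) := by
        by_cases hvv : v₀ = v
        · rw [if_pos hvv] at hsc ⊢
          have he : (∑ k ∈ univ.filter (G.Adj v), crossCount τ m v k)
              = 2 * ((range m).filter (fun m' => τ m' = v)).card := by omega
          rw [he]; push_cast; ring
        · rw [if_neg hvv] at hsc ⊢
          have he : (∑ k ∈ univ.filter (G.Adj v), crossCount τ m v k)
              = 2 * ((range m).filter (fun m' => τ m' = v)).card + 1 := by omega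
          rw [he]; push_cast; ring
      rw [hcast]
      ring
    rw [Finset.prod_congr rfl hterm,
      prod_filter_count (fun m => τ m = v)
        (fun c => ((univ.filter (G.Adj v)).card : ℝ) * α + 2 * (c : ℝ) + 1
          - (if v₀ = v then 1 else 0)) n]
  rw [hNum, hDen σ hσ h0, hDen σ' hσ' h0']
  congr 1
  apply Finset.prod_congr rfl
  intro v _
  rw [hN v]
end

section
/- For edge-reinforced random walk with α = 2 on the path graph with three vertices a — 0 — b started at the middle vertex 0, for every n the vector of half-crossing-counts (L_{2n}^{0a}/2, L_{2n}^{0b}/2) has the same distribution as the ball counts added in a Pólya urn after n draws; consequently L_{2n}^{0a}/(2n) converges in distribution to the uniform distribution on [0,1]. -/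
open MeasureTheory Filter Topology ENNReal

/-- Number of crossings of the undirected edge `{i,j}` by the walk `X` up to time `n`. -/
def walkCross {Ω : Type*} (X : ℕ → Ω → Fin 3) (n : ℕ) (ω : Ω) (i j : Fin 3) : ℕ :=
  ((Finset.range n).filter
    (fun m => (X m ω = i ∧ X (m + 1) ω = j) ∨ (X m ω = j ∧ X (m + 1) ω = i))).card

/-- Adjacency in the path graph `a — 0 — b` on vertices `{0, 1, 2}` (middle vertex `1`):
two vertices are adjacent iff exactly one of them equals `1`. -/
def pathAdj (i j : Fin 3) : Prop := (i = 1 ∧ j ≠ 1) ∨ (j = 1 ∧ i ≠ 1)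

instance : DecidableRel pathAdj := fun i j => by unfold pathAdj; infer_instance

section Aux

variable {Ω : Type*} [MeasurableSpace Ω] (X : ℕ → Ω → Fin 3)

/-- The filtration σ-algebra. -/
def Fsig (n : ℕ) : MeasurableSpace Ω :=
  ⨆ i ∈ Finset.range (n + 1), MeasurableSpace.comap (X i) ⊤

lemma Fsig_le (hmeas : ∀ n, Measurable (X n)) (n : ℕ) : Fsig X n ≤ ‹MeasurableSpace Ω› := by
  refine iSup₂_le fun i _ => ?_
  rintro s ⟨t, -, rfl⟩
  exact hmeas i (by exact MeasurableSet.of_discrete)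

lemma comap_le_Fsig {i n : ℕ} (h : i ≤ n) :
    MeasurableSpace.comap (X i) ⊤ ≤ Fsig X n := by
  exact le_biSup (f := fun i => MeasurableSpace.comap (X i) ⊤)
    (Finset.mem_range.2 (Nat.lt_succ_of_le h))

lemma measurableSet_X_eq {i n : ℕ} (h : i ≤ n) (v : Fin 3) :
    MeasurableSet[Fsig X n] {ω | X i ω = v} :=
  comap_le_Fsig X h _ ⟨{v}, trivial, rfl⟩

/-- transition density. -/
noncomputable def pfun (n : ℕ) (j : Fin 3) (ω : Ω) : ℝ :=
  (if pathAdj (X n ω) j then (2 : ℝ) + walkCross X n ω (X n ω) j else 0) /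
    ∑ k : Fin 3, (if pathAdj (X n ω) k then (2 : ℝ) + walkCross X n ω (X n ω) k else 0)


variable (μ : Measure Ω) [IsProbabilityMeasure μ]

lemma key_integral (hmeas : ∀ n, Measurable (X n))
    (hcond : ∀ (n : ℕ) (j : Fin 3),
      μ[Set.indicator {ω | X (n + 1) ω = j} (fun _ => (1 : ℝ)) | Fsig X n]
        =ᵐ[μ] pfun X n j)
    (n : ℕ) (j : Fin 3) {A : Set Ω} (hA : MeasurableSet[Fsig X n] A) :
    (μ (A ∩ {ω | X (n + 1) ω = j})).toReal = ∫ ω in A, pfun X n j ω ∂μ := by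
  have hle := Fsig_le X hmeas n
  have hsm : MeasurableSet {ω | X (n + 1) ω = j} :=
    hmeas (n + 1) (MeasurableSet.of_discrete (s := {j}))
  have hint : Integrable (Set.indicator {ω | X (n + 1) ω = j} (fun _ => (1 : ℝ))) μ :=
    (integrable_const 1).indicator hsm
  have h1 : ∫ ω in A, pfun X n j ω ∂μ
      = ∫ ω in A, (μ[Set.indicator {ω | X (n + 1) ω = j} (fun _ => (1 : ℝ)) | Fsig X n]) ω ∂μ :=
    integral_congr_ae (ae_restrict_of_ae (hcond n j).symm)
  have hsig : SigmaFinite (μ.trim hle) := by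
    infer_instance
  rw [h1, setIntegral_condExp hle hint hA, setIntegral_indicator hsm, setIntegral_const,
    smul_eq_mul, mul_one, Measure.real]


lemma nonadj_null (hmeas : ∀ n, Measurable (X n))
    (hcond : ∀ (n : ℕ) (j : Fin 3),
      μ[Set.indicator {ω | X (n + 1) ω = j} (fun _ => (1 : ℝ)) | Fsig X n]
        =ᵐ[μ] pfun X n j)
    (n : ℕ) (i j : Fin 3) (hna : ¬ pathAdj i j) :
    μ ({ω | X n ω = i} ∩ {ω | X (n + 1) ω = j}) = 0 := by
  have hA : MeasurableSet[Fsig X n] {ω | X n ω = i} := measurableSet_X_eq X le_rfl i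
  have h := key_integral X μ hmeas hcond n j hA
  have hz : ∫ ω in {ω | X n ω = i}, pfun X n j ω ∂μ = 0 := by
    rw [setIntegral_congr_fun (Fsig_le X hmeas n _ hA) (g := fun _ => (0:ℝ))
      (fun ω hω => by simp only [pfun, Set.mem_setOf_eq.mp hω, if_neg hna, zero_div]),
      integral_zero]
  rw [hz] at h
  exact (ENNReal.toReal_eq_zero_iff _).1 h |>.resolve_right (measure_ne_top μ _)

/-- The good set: the walk always moves along edges. -/
def goodSet : Set Ω := {ω | ∀ n, pathAdj (X n ω) (X (n + 1) ω)}

lemma goodSet_compl_null (hmeas : ∀ n, Measurable (X n))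
    (hcond : ∀ (n : ℕ) (j : Fin 3),
      μ[Set.indicator {ω | X (n + 1) ω = j} (fun _ => (1 : ℝ)) | Fsig X n]
        =ᵐ[μ] pfun X n j) :
    μ (goodSet X)ᶜ = 0 := by
  have hsub : (goodSet X)ᶜ ⊆
      ⋃ (n : ℕ) (i : Fin 3) (j : Fin 3) (_ : ¬ pathAdj i j),
        ({ω | X n ω = i} ∩ {ω | X (n + 1) ω = j}) := by
    intro ω hω
    simp only [goodSet, Set.mem_compl_iff, Set.mem_setOf_eq, not_forall] at hω
    obtain ⟨n, hn⟩ := hω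
    exact Set.mem_iUnion.2 ⟨n, Set.mem_iUnion.2 ⟨X n ω, Set.mem_iUnion.2 ⟨X (n+1) ω,
      Set.mem_iUnion.2 ⟨hn, rfl, rfl⟩⟩⟩⟩
  refine measure_mono_null hsub ?_
  refine measure_iUnion_null fun n => measure_iUnion_null fun i => measure_iUnion_null fun j =>
    measure_iUnion_null fun hna => nonadj_null X μ hmeas hcond n i j hna


lemma good_even (h0 : ∀ ω, X 0 ω = 1) {ω : Ω} (hω : ω ∈ goodSet X) (t : ℕ) :
    X (2 * t) ω = 1 := by
  induction t with
  | zero => simpa using h0 ω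
  | succ t ih =>
    have h1 := hω (2 * t)
    have hodd : X (2 * t + 1) ω ≠ 1 := by
      rcases h1 with ⟨-, h⟩ | ⟨-, h⟩
      · exact h
      · exact absurd ih h
    have h2 := hω (2 * t + 1)
    have : X (2 * t + 1 + 1) ω = 1 := by
      rcases h2 with ⟨h, -⟩ | ⟨h, -⟩
      · exact absurd h hodd
      · exact h
    simpa [show 2 * (t + 1) = 2 * t + 1 + 1 by ring] using this

lemma good_odd (h0 : ∀ ω, X 0 ω = 1) {ω : Ω} (hω : ω ∈ goodSet X) (t : ℕ) :
    X (2 * t + 1) ω ≠ 1 := by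
  have h1 := hω (2 * t)
  rcases h1 with ⟨-, h⟩ | ⟨-, h⟩
  · exact h
  · exact absurd (good_even X h0 hω t) h

lemma walkCross_succ (n : ℕ) (ω : Ω) (i j : Fin 3) :
    walkCross X (n + 1) ω i j = walkCross X n ω i j +
      (if (X n ω = i ∧ X (n + 1) ω = j) ∨ (X n ω = j ∧ X (n + 1) ω = i) then 1 else 0) := by
  unfold walkCross
  rw [Finset.range_add_one, Finset.filter_insert]
  split
  · rw [Finset.card_insert_of_notMem (by simp)]
  · simp

/-- Number of left excursions among the first `n`. -/
def Sfun (n : ℕ) (ω : Ω) : ℕ := ((Finset.range n).filter (fun t => X (2 * t + 1) ω = 0)).card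

lemma Sfun_le (n : ℕ) (ω : Ω) : Sfun X n ω ≤ n :=
  le_trans (Finset.card_filter_le _ _) (by simp)

lemma Sfun_succ (n : ℕ) (ω : Ω) :
    Sfun X (n + 1) ω = Sfun X n ω + (if X (2 * n + 1) ω = 0 then 1 else 0) := by
  unfold Sfun
  rw [Finset.range_add_one, Finset.filter_insert]
  split
  · rw [Finset.card_insert_of_notMem (by simp)]
  · simp

lemma fin3_cases (v : Fin 3) : v = 0 ∨ v = 1 ∨ v = 2 := by fin_cases v <;> simp

lemma cross_step (h0 : ∀ ω, X 0 ω = 1) {ω : Ω} (hω : ω ∈ goodSet X) (n : ℕ) (j : Fin 3)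
    (hj : j ≠ 1) :
    walkCross X (2 * (n + 1)) ω 1 j =
      walkCross X (2 * n) ω 1 j + (if X (2 * n + 1) ω = j then 2 else 0) := by
  have he : X (2 * n) ω = 1 := good_even X h0 hω n
  have he2 : X (2 * n + 1 + 1) ω = 1 := by
    simpa [show 2 * (n + 1) = 2 * n + 1 + 1 by ring] using good_even X h0 hω (n + 1)
  have ho : X (2 * n + 1) ω ≠ 1 := good_odd X h0 hω n
  rw [show 2 * (n + 1) = 2 * n + 1 + 1 by ring, walkCross_succ, walkCross_succ]
  by_cases hx : X (2 * n + 1) ω = j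
  · rw [if_pos (Or.inl ⟨he, hx⟩), if_pos (Or.inr ⟨hx, he2⟩), if_pos hx]
  · have hC0 : ¬ ((X (2*n) ω = 1 ∧ X (2*n+1) ω = j) ∨ (X (2*n) ω = j ∧ X (2*n+1) ω = 1)) := by
      rintro (⟨-, h⟩ | ⟨h, -⟩)
      · exact hx h
      · exact hj (h.symm.trans he)
    have hC1 : ¬ ((X (2*n+1) ω = 1 ∧ X (2*n+1+1) ω = j) ∨
        (X (2*n+1) ω = j ∧ X (2*n+1+1) ω = 1)) := by
      rintro (⟨h, -⟩ | ⟨h, -⟩)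
      · exact ho h
      · exact hx h
    rw [if_neg hC0, if_neg hC1, if_neg hx]

lemma cross_left (h0 : ∀ ω, X 0 ω = 1) {ω : Ω} (hω : ω ∈ goodSet X) (n : ℕ) :
    walkCross X (2 * n) ω 1 0 = 2 * Sfun X n ω := by
  induction n with
  | zero => simp [walkCross, Sfun]
  | succ n ih =>
    rw [cross_step X h0 hω n 0 (by decide), ih, Sfun_succ]
    split <;> ring

lemma cross_right (h0 : ∀ ω, X 0 ω = 1) {ω : Ω} (hω : ω ∈ goodSet X) (n : ℕ) :
    walkCross X (2 * n) ω 1 2 = 2 * (n - Sfun X n ω) := by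
  induction n with
  | zero => simp [walkCross, Sfun]
  | succ n ih =>
    have hSle := Sfun_le X n ω
    have ho : X (2 * n + 1) ω ≠ 1 := good_odd X h0 hω n
    rw [cross_step X h0 hω n 2 (by decide), ih, Sfun_succ]
    rcases fin3_cases (X (2 * n + 1) ω) with hx | hx | hx
    · rw [if_neg (by simp [hx]), if_pos hx]; omega
    · exact absurd hx ho
    · rw [if_pos hx, if_neg (by simp [hx])]; omega


lemma measurable_Sfun (n : ℕ) : Measurable[Fsig X (2 * n)] (Sfun X n) := by
  have h : Sfun X n = fun ω => ∑ t ∈ Finset.range n, if X (2 * t + 1) ω = 0 then 1 else 0 := by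
    funext ω; exact Finset.card_filter _ _
  rw [h]
  refine Finset.measurable_sum _ fun t ht => ?_
  have hset : MeasurableSet[Fsig X (2 * n)] {ω | X (2 * t + 1) ω = 0} :=
    measurableSet_X_eq X (by have := Finset.mem_range.1 ht; omega) 0
  exact Measurable.ite hset measurable_const measurable_const

lemma measurableSet_Sfun (n k : ℕ) : MeasurableSet[Fsig X (2 * n)] {ω | Sfun X n ω = k} :=
  measurable_Sfun X n (measurableSet_singleton k)

lemma diff_toReal (A B : Set Ω) (hB : MeasurableSet B) :
    (μ (A \ B)).toReal = (μ A).toReal - (μ (A ∩ B)).toReal := by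
  have h := measure_inter_add_diff A hB (μ := μ)
  have h1 : μ (A ∩ B) ≠ ⊤ := measure_ne_top μ _
  have h2 : μ (A \ B) ≠ ⊤ := measure_ne_top μ _
  rw [← h, ENNReal.toReal_add h1 h2]; ring

lemma pfun_val (h0 : ∀ ω, X 0 ω = 1) {ω : Ω} (hω : ω ∈ goodSet X) {n j : ℕ} (hj : j ≤ n)
    (hS : Sfun X n ω = j) :
    pfun X (2 * n) 0 ω = ((j : ℝ) + 1) / ((n : ℝ) + 2) := by
  have hX1 : X (2 * n) ω = 1 := good_even X h0 hω n
  have hc0 : walkCross X (2 * n) ω 1 0 = 2 * j := by rw [cross_left X h0 hω n, hS]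
  have hc2 : walkCross X (2 * n) ω 1 2 = 2 * (n - j) := by rw [cross_right X h0 hω n, hS]
  unfold pfun
  rw [hX1, Fin.sum_univ_three, hc0, hc2,
    if_pos (show pathAdj 1 0 by decide), if_neg (show ¬ pathAdj 1 1 by decide),
    if_pos (show pathAdj 1 2 by decide)]
  have hcast : ((n - j : ℕ) : ℝ) = (n : ℝ) - (j : ℝ) := Nat.cast_sub hj
  push_cast [hcast]
  rw [div_eq_div_iff (by nlinarith [Nat.cast_nonneg (α := ℝ) j, Nat.cast_nonneg (α := ℝ) n,
    (by exact_mod_cast hj : (j:ℝ) ≤ (n:ℝ))]) (by positivity)]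
  ring

lemma measure_SB (hmeas : ∀ n, Measurable (X n))
    (hcond : ∀ (n : ℕ) (j : Fin 3),
      μ[Set.indicator {ω | X (n + 1) ω = j} (fun _ => (1 : ℝ)) | Fsig X n]
        =ᵐ[μ] pfun X n j)
    (h0 : ∀ ω, X 0 ω = 1) (n j : ℕ) (hj : j ≤ n) :
    (μ ({ω | Sfun X n ω = j} ∩ {ω | X (2 * n + 1) ω = 0})).toReal
      = (((j : ℝ) + 1) / ((n : ℝ) + 2)) * (μ {ω | Sfun X n ω = j}).toReal := by
  have hA : MeasurableSet[Fsig X (2 * n)] {ω | Sfun X n ω = j} := measurableSet_Sfun X n j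
  have hAm : MeasurableSet {ω | Sfun X n ω = j} := Fsig_le X hmeas (2 * n) _ hA
  have hkey := key_integral X μ hmeas hcond (2 * n) 0 hA
  have hG : (μ.restrict {ω | Sfun X n ω = j}) (goodSet X)ᶜ = 0 :=
    le_antisymm (le_trans (Measure.restrict_le_self _)
      (goodSet_compl_null X μ hmeas hcond).le) zero_le
  have hae : pfun X (2 * n) 0 =ᵐ[μ.restrict {ω | Sfun X n ω = j}]
      fun _ => ((j : ℝ) + 1) / ((n : ℝ) + 2) := by
    filter_upwards [ae_restrict_mem hAm,
      (measure_eq_zero_iff_ae_notMem.1 hG).mono fun ω h => not_not.1 h] with ω hωA hωG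
    exact pfun_val X h0 hωG hj hωA
  rw [hkey, integral_congr_ae hae, setIntegral_const, smul_eq_mul]
  simp only [Measure.real]
  ring


lemma Sfun_empty (n k : ℕ) (h : n < k) : {ω | Sfun X n ω = k} = ∅ :=
  Set.eq_empty_iff_forall_notMem.2 fun ω hω => by
    have := Sfun_le X n ω; simp only [Set.mem_setOf_eq] at hω; omega

lemma Sfun_dist (hmeas : ∀ n, Measurable (X n))
    (hcond : ∀ (n : ℕ) (j : Fin 3),
      μ[Set.indicator {ω | X (n + 1) ω = j} (fun _ => (1 : ℝ)) | Fsig X n]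
        =ᵐ[μ] pfun X n j)
    (h0 : ∀ ω, X 0 ω = 1) :
    ∀ n k, (μ {ω | Sfun X n ω = k}).toReal = if k ≤ n then 1 / ((n : ℝ) + 1) else 0 := by
  intro n
  induction n with
  | zero =>
    intro k
    rcases Nat.eq_zero_or_pos k with rfl | hk
    · have h : {ω | Sfun X 0 ω = 0} = Set.univ := by ext ω; simp [Sfun]
      rw [h]; simp
    · rw [Sfun_empty X 0 k hk, if_neg (by omega)]; simp
  | succ n ih =>
    intro k
    have hmB : MeasurableSet {ω | X (2 * n + 1) ω = 0} :=
      hmeas (2 * n + 1) (MeasurableSet.of_discrete (s := {0}))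
    have hA : ∀ j, MeasurableSet {ω | Sfun X n ω = j} := fun j =>
      Fsig_le X hmeas (2 * n) _ (measurableSet_Sfun X n j)
    rcases k with _ | k
    · have hset : {ω | Sfun X (n + 1) ω = 0}
          = {ω | Sfun X n ω = 0} \ {ω | X (2 * n + 1) ω = 0} := by
        ext ω
        simp only [Set.mem_setOf_eq, Set.mem_diff, Sfun_succ]
        by_cases hx : X (2 * n + 1) ω = 0 <;> simp [hx]
      rw [hset, diff_toReal μ _ _ hmB, measure_SB X μ hmeas hcond h0 n 0 (by omega), ih 0,
        if_pos (by omega), if_pos (by omega)]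
      push_cast
      field_simp
      ring
    · have hset : {ω | Sfun X (n + 1) ω = k + 1} =
          ({ω | Sfun X n ω = k} ∩ {ω | X (2 * n + 1) ω = 0}) ∪
          ({ω | Sfun X n ω = k + 1} \ {ω | X (2 * n + 1) ω = 0}) := by
        ext ω
        simp only [Set.mem_setOf_eq, Set.mem_union, Set.mem_inter_iff, Set.mem_diff, Sfun_succ]
        by_cases hx : X (2 * n + 1) ω = 0 <;> simp [hx]
      have hdisj : Disjoint ({ω | Sfun X n ω = k} ∩ {ω | X (2 * n + 1) ω = 0})
          ({ω | Sfun X n ω = k + 1} \ {ω | X (2 * n + 1) ω = 0}) :=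
        Set.disjoint_left.2 fun ω h1 h2 => h2.2 h1.2
      rw [hset, measure_union hdisj ((hA (k + 1)).diff hmB),
        ENNReal.toReal_add (measure_ne_top μ _) (measure_ne_top μ _)]
      by_cases hk : k ≤ n
      · rw [measure_SB X μ hmeas hcond h0 n k hk, ih k, if_pos hk, diff_toReal μ _ _ hmB]
        by_cases hk1 : k + 1 ≤ n
        · rw [measure_SB X μ hmeas hcond h0 n (k + 1) hk1, ih (k + 1), if_pos hk1,
            if_pos (by omega)]
          push_cast
          field_simp
          ring
        · have hkn : n = k := by omega
          subst hkn
          rw [Sfun_empty X n (n + 1) (by omega)]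
          simp only [Set.empty_inter, measure_empty, ENNReal.toReal_zero, sub_zero, sub_self]
          rw [if_pos (by omega)]
          push_cast
          field_simp
          ring
      · rw [Sfun_empty X n k (by omega), Sfun_empty X n (k + 1) (by omega), if_neg (by omega)]
        simp

end Aux

lemma floor_tendsto {x : ℝ} (hx : 0 ≤ x) :
    Filter.Tendsto (fun n : ℕ => ((⌊(n : ℝ) * x⌋₊ : ℝ) + 1) / ((n : ℝ) + 1))
      Filter.atTop (𝓝 x) := by
  have haux : ∀ c : ℝ, Filter.Tendsto (fun n : ℕ => ((n : ℝ) * x + c) / ((n : ℝ) + 1))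
      Filter.atTop (𝓝 x) := by
    intro c
    have h1 : Filter.Tendsto (fun n : ℕ => (1 : ℝ) / ((n : ℝ) + 1)) Filter.atTop (𝓝 0) :=
      tendsto_one_div_add_atTop_nhds_zero_nat
    have h2 : Filter.Tendsto (fun n : ℕ => x + (c - x) * ((1 : ℝ) / ((n : ℝ) + 1)))
        Filter.atTop (𝓝 (x + (c - x) * 0)) :=
      tendsto_const_nhds.add (tendsto_const_nhds.mul h1)
    rw [mul_zero, add_zero] at h2
    refine h2.congr fun n => ?_
    have hn : ((n : ℝ) + 1) ≠ 0 := by positivity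
    field_simp
    ring
  refine tendsto_of_tendsto_of_tendsto_of_le_of_le (haux 0) (haux 1) (fun n => ?_) (fun n => ?_)
  · have h : (n : ℝ) * x + 0 ≤ (⌊(n : ℝ) * x⌋₊ : ℝ) + 1 := by
      rw [add_zero]; exact (Nat.lt_floor_add_one _).le
    gcongr
  · have h : (⌊(n : ℝ) * x⌋₊ : ℝ) ≤ (n : ℝ) * x := Nat.floor_le (by positivity)
    gcongr

/-- For edge-reinforced random walk with initial weights `α = 2` on the path `a — 0 — b`
(vertices `a = 0`, middle `= 1`, `b = 2`) started at the middle vertex, the half-crossing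
counts `(L_{2n}^{0a}/2, L_{2n}^{0b}/2)` are distributed as the added ball counts of a
Pólya urn after `n` draws (uniform on `{(k, n-k) : 0 ≤ k ≤ n}`), and consequently
`L_{2n}^{0a}/(2n)` converges in distribution to the uniform distribution on `[0,1]`. -/
theorem errw_path_graph_polya
    {Ω : Type*} [MeasurableSpace Ω] (μ : Measure Ω) [IsProbabilityMeasure μ]
    (X : ℕ → Ω → Fin 3)
    (hmeas : ∀ n, Measurable (X n))
    (h0 : ∀ ω, X 0 ω = 1)
    (hcond : ∀ (n : ℕ) (j : Fin 3),
      μ[Set.indicator {ω | X (n + 1) ω = j} (fun _ => (1 : ℝ)) |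
          ⨆ i ∈ Finset.range (n + 1), MeasurableSpace.comap (X i) ⊤]
        =ᵐ[μ] fun ω =>
          (if pathAdj (X n ω) j then (2 : ℝ) + walkCross X n ω (X n ω) j else 0) /
            ∑ k : Fin 3,
              (if pathAdj (X n ω) k then (2 : ℝ) + walkCross X n ω (X n ω) k else 0)) :
    (∀ n k : ℕ, k ≤ n →
        μ {ω | walkCross X (2 * n) ω 1 0 = 2 * k ∧ walkCross X (2 * n) ω 1 2 = 2 * (n - k)}
          = ((n : ℝ≥0∞) + 1)⁻¹) ∧
      (∀ x ∈ Set.Ioo (0 : ℝ) 1,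
        Tendsto (fun n : ℕ =>
            (μ {ω | (walkCross X (2 * n) ω 1 0 : ℝ) / (2 * n) ≤ x}).toReal)
          atTop (𝓝 x)) := by
  have hcond' : ∀ (n : ℕ) (j : Fin 3),
      μ[Set.indicator {ω | X (n + 1) ω = j} (fun _ => (1 : ℝ)) | Fsig X n] =ᵐ[μ] pfun X n j :=
    hcond
  have hGc : μ (goodSet X)ᶜ = 0 := goodSet_compl_null X μ hmeas hcond'
  have hmeq : ∀ T S : Set Ω, T ∩ goodSet X = S ∩ goodSet X → μ T = μ S := by
    have key : ∀ U V : Set Ω, U ∩ goodSet X = V ∩ goodSet X → μ U ≤ μ V := by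
      intro U V h
      calc μ U ≤ μ ((V ∩ goodSet X) ∪ (goodSet X)ᶜ) := measure_mono (fun ω hω => by
            by_cases hg : ω ∈ goodSet X
            · exact Or.inl (h ▸ ⟨hω, hg⟩)
            · exact Or.inr hg)
        _ ≤ μ (V ∩ goodSet X) + μ (goodSet X)ᶜ := measure_union_le _ _
        _ = μ (V ∩ goodSet X) := by rw [hGc, add_zero]
        _ ≤ μ V := measure_mono Set.inter_subset_left
    exact fun T S h => le_antisymm (key T S h) (key S T h.symm)
  have hdist : ∀ n k : ℕ, k ≤ n → μ {ω | Sfun X n ω = k} = ((n : ℝ≥0∞) + 1)⁻¹ := by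
    intro n k hk
    have h1 := Sfun_dist X μ hmeas hcond' h0 n k
    rw [if_pos hk] at h1
    rw [← ENNReal.ofReal_toReal (measure_ne_top μ _), h1, one_div,
      ENNReal.ofReal_inv_of_pos (by positivity), ENNReal.ofReal_add (by positivity) zero_le_one,
      ENNReal.ofReal_natCast, ENNReal.ofReal_one]
  constructor
  · intro n k hk
    have hTS : {ω | walkCross X (2 * n) ω 1 0 = 2 * k ∧ walkCross X (2 * n) ω 1 2 = 2 * (n - k)}
        ∩ goodSet X = {ω | Sfun X n ω = k} ∩ goodSet X := by
      ext ω
      simp only [Set.mem_inter_iff, Set.mem_setOf_eq, and_congr_left_iff]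
      intro hg
      rw [cross_left X h0 hg n, cross_right X h0 hg n]
      constructor
      · rintro ⟨h1, -⟩; omega
      · rintro rfl; exact ⟨rfl, rfl⟩
    rw [hmeq _ _ hTS, hdist n k hk]
  · rintro x ⟨hx0, hx1⟩
    have heq : ∀ n : ℕ, 1 ≤ n →
        (μ {ω | (walkCross X (2 * n) ω 1 0 : ℝ) / (2 * n) ≤ x}).toReal
          = ((⌊(n : ℝ) * x⌋₊ : ℝ) + 1) / ((n : ℝ) + 1) := by
      intro n hn
      set m := ⌊(n : ℝ) * x⌋₊ with hm
      have hnpos : (0 : ℝ) < n := by exact_mod_cast hn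
      have hmn : m < n := by
        have h1 : (m : ℝ) ≤ (n : ℝ) * x := Nat.floor_le (by positivity)
        have h2 : (n : ℝ) * x < n := by nlinarith
        exact_mod_cast h1.trans_lt h2
      have hset : {ω | (walkCross X (2 * n) ω 1 0 : ℝ) / (2 * n) ≤ x} ∩ goodSet X
          = {ω | Sfun X n ω ≤ m} ∩ goodSet X := by
        ext ω
        simp only [Set.mem_inter_iff, Set.mem_setOf_eq, and_congr_left_iff]
        intro hg
        rw [cross_left X h0 hg n, hm, Nat.le_floor_iff (by positivity)]
        push_cast
        rw [show (2 : ℝ) * (Sfun X n ω) / (2 * n) = (Sfun X n ω) / n by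
            rw [mul_div_mul_left _ _ two_ne_zero], div_le_iff₀ hnpos, mul_comm x (n : ℝ)]
      have hunion : {ω | Sfun X n ω ≤ m} = ⋃ k ∈ Finset.range (m + 1), {ω | Sfun X n ω = k} := by
        ext ω
        simp [Nat.lt_succ_iff, eq_comm]
      have hdisjp : (↑(Finset.range (m + 1)) : Set ℕ).PairwiseDisjoint
          (fun k => {ω | Sfun X n ω = k}) := by
        intro a _ b _ hab
        refine Set.disjoint_left.2 fun ω h1 h2 => hab ?_
        simp only [Set.mem_setOf_eq] at h1 h2
        omega
      have hmsum : μ {ω | Sfun X n ω ≤ m} = ((m + 1 : ℕ) : ℝ≥0∞) * ((n : ℝ≥0∞) + 1)⁻¹ := by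
        rw [hunion, measure_biUnion_finset hdisjp (fun k _ =>
          Fsig_le X hmeas (2 * n) _ (measurableSet_Sfun X n k))]
        rw [Finset.sum_congr rfl (fun k hk => hdist n k
          (by have := Finset.mem_range.1 hk; omega))]
        rw [Finset.sum_const, Finset.card_range, nsmul_eq_mul]
      rw [hmeq _ _ hset, hmsum, ENNReal.toReal_mul, ENNReal.toReal_inv, ENNReal.toReal_natCast]
      rw [show ((n : ℝ≥0∞) + 1).toReal = (n : ℝ) + 1 by
        rw [ENNReal.toReal_add (ENNReal.natCast_ne_top n) ENNReal.one_ne_top,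
          ENNReal.toReal_natCast, ENNReal.toReal_one]]
      rw [div_eq_mul_inv]
      push_cast
      ring
    exact Tendsto.congr' (Filter.eventually_atTop.2 ⟨1, fun n hn => (heq n hn).symm⟩)
      (floor_tendsto hx0.le)
end
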